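/- Let K be a field and let B : ℕ → ℕ be strictly increasing with B(l) > 2^{l+2} for all l. Define B^{-1}(i) = max({j : B(j) ≤ i} ∪ {0}) and f : ℕ → ℕ by f(i) = max({j : 2^{(j^{B^{-1}(i)})} ≤ i} ∪ {0}). Then for all d and all l > d + 2: M_d^f(l) < 2^{B(l)^{d+2}}. Concretely, every sequence I_0, …, I_R of monomial ideals in K[X_d, …, X_0, Y] with R = 2^{B(l)^{d+2}} and deg(I_i) ≤ l + f(i) for all i ≤ R contains indices i < j with I_i ⊇ I_j. -/

import Mathlib

/-- `I` is a monomial ideal generated by monomials of total degree at most `deg`. -/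
def MonGen {K : Type*} [Field K] {n : ℕ} (I : Ideal (MvPolynomial (Fin n) K)) (deg : ℕ) : Prop :=
  ∃ S : Set (Fin n →₀ ℕ), (∀ s ∈ S, (s.sum fun _ e => e) ≤ deg) ∧
    I = Ideal.span ((fun s => (MvPolynomial.monomial s (1 : K))) '' S)

/-- `Mnum K d f l` : the least `M` (infimum of the set of such `M`) such that every
sequence `I_0, …, I_M` of monomial ideals in the `d+2`-variable polynomial ring over `K`
with `deg (I i) ≤ l + f i` for all `i ≤ M` admits `i < j ≤ M` with `I j ⊆ I i`. -/
noncomputable def Mnum (K : Type*) [Field K] (d : ℕ) (f : ℕ → ℕ) (l : ℕ) : ℕ :=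
  sInf {M | ∀ I : ℕ → Ideal (MvPolynomial (Fin (d + 2)) K),
    (∀ i ≤ M, MonGen (I i) (l + f i)) →
    ∃ i j, i < j ∧ j ≤ M ∧ I j ≤ I i}

/-- `B⁻¹ i = max ({j | B j ≤ i} ∪ {0})`. -/
noncomputable def Binv (B : ℕ → ℕ) (i : ℕ) : ℕ := sSup ({j | B j ≤ i} ∪ {0})

/-- `f i = max ({j | 2^{j^{B⁻¹ i}} ≤ i} ∪ {0})`, i.e. `f i = ⌊(log₂ i)^{1/B⁻¹(i)}⌋`. -/
noncomputable def fpar (B : ℕ → ℕ) (i : ℕ) : ℕ := sSup ({j | 2 ^ j ^ Binv B i ≤ i} ∪ {0})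

lemma sSup_union_zero (s : Set ℕ) :
    sSup (s ∪ {0}) = 0 ∨ (BddAbove (s ∪ {0}) ∧ sSup (s ∪ {0}) ∈ s) := by
  by_cases h : BddAbove (s ∪ {0})
  · rcases Nat.sSup_mem ⟨0, Or.inr rfl⟩ h with h' | h'
    · exact Or.inr ⟨h, h'⟩
    · exact Or.inl h'
  · left
    rw [csSup_of_not_bddAbove h, csSup_empty]
    rfl

lemma two_mul_le_two_pow : ∀ F : ℕ, 2 * F ≤ 2 ^ F := by
  intro F
  induction F with
  | zero => norm_num
  | succ m ih =>
    rcases Nat.eq_zero_or_pos m with hm | hm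
    · subst hm; norm_num
    · have h2 : 2 ≤ 2 ^ m := Nat.one_lt_two_pow (by omega)
      calc 2 * (m + 1) = 2 * m + 2 := by ring
        _ ≤ 2 ^ m + 2 ^ m := Nat.add_le_add ih h2
        _ = 2 ^ (m + 1) := by ring

lemma fpar_le (B : ℕ → ℕ) (hB : StrictMono B) (hB2 : ∀ l, 2 ^ (l + 2) < B l)
    (d l : ℕ) (hl : d + 2 < l) (i : ℕ) (hi : i ≤ 2 ^ (B l) ^ (d + 2)) :
    fpar B i ≤ B l / 2 := by
  rcases sSup_union_zero {j | 2 ^ j ^ Binv B i ≤ i} with h0 | ⟨hbdd, hmem⟩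
  · rw [fpar, h0]; exact Nat.zero_le _
  set F := fpar B i with hF
  have hFi : 2 ^ F ^ Binv B i ≤ i := hmem
  rcases Nat.eq_zero_or_pos F with hF0 | hF1
  · rw [hF0]; exact Nat.zero_le _
  rcases Nat.eq_zero_or_pos (Binv B i) with hk0 | hk1
  · -- then the defining set is unbounded: contradiction with `hbdd`
    exfalso
    have h2i : 2 ≤ i := by simpa [hk0] using hFi
    obtain ⟨b, hb⟩ := hbdd
    have : b + 1 ∈ {j | 2 ^ j ^ Binv B i ≤ i} ∪ {0} := by
      left; simpa [hk0] using h2i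
    exact absurd (hb this) (by omega)
  have hFFk : F ≤ F ^ Binv B i := Nat.le_self_pow (by omega) F
  rcases lt_or_ge i (B l) with hiB | hiB
  · -- small `i`: `2F ≤ 2^F ≤ i < B l`
    have h2F : 2 * F ≤ i :=
      le_trans (le_trans (two_mul_le_two_pow F) (Nat.pow_le_pow_right (by norm_num) hFFk)) hFi
    rw [Nat.le_div_iff_mul_le (by norm_num)]
    omega
  · -- big `i`: `Binv B i ≥ l`
    have hbddB : BddAbove ({j | B j ≤ i} ∪ {0}) := by
      refine ⟨i, fun j hj => ?_⟩
      rcases hj with hj | hj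
      · exact le_trans (hB.le_apply) hj
      · simp at hj; omega
    have hkl : l ≤ Binv B i := le_csSup hbddB (Or.inl hiB)
    have hFl : F ^ l ≤ (B l) ^ (d + 2) := by
      have h1 : F ^ l ≤ F ^ Binv B i := Nat.pow_le_pow_right hF1 hkl
      have h2 : 2 ^ (F ^ Binv B i) ≤ 2 ^ ((B l) ^ (d + 2)) := le_trans hFi hi
      have h3 : F ^ Binv B i ≤ (B l) ^ (d + 2) :=
        (Nat.pow_le_pow_iff_right (by norm_num)).mp h2
      omega
    by_contra hcon
    push_neg at hcon
    have hBl2F : B l < 2 * F := by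
      rw [Nat.div_lt_iff_lt_mul (by norm_num)] at hcon
      omega
    have hFd : F ^ (d + 3) ≤ F ^ l := Nat.pow_le_pow_right hF1 (by omega)
    have key : (B l) ^ (d + 3) < 2 ^ (d + 3) * (B l) ^ (d + 2) := by
      calc (B l) ^ (d + 3) < (2 * F) ^ (d + 3) := Nat.pow_lt_pow_left hBl2F (by omega)
        _ = 2 ^ (d + 3) * F ^ (d + 3) := by rw [mul_pow]
        _ ≤ 2 ^ (d + 3) * (B l) ^ (d + 2) :=
            Nat.mul_le_mul_left _ (le_trans hFd hFl)
    have hcancel : B l < 2 ^ (d + 3) := by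
      have h1 : (B l) ^ (d + 2) * (B l) < (B l) ^ (d + 2) * 2 ^ (d + 3) := by
        calc (B l) ^ (d + 2) * (B l) = (B l) ^ (d + 3) := by rw [← pow_succ]
          _ < 2 ^ (d + 3) * (B l) ^ (d + 2) := key
          _ = (B l) ^ (d + 2) * 2 ^ (d + 3) := by ring
      exact Nat.lt_of_mul_lt_mul_left h1
    have : 2 ^ (d + 3) ≤ 2 ^ (l + 2) := Nat.pow_le_pow_right (by norm_num) (by omega)
    have := hB2 l
    omega

lemma le_sum_deg {n : ℕ} (s : Fin n →₀ ℕ) (x : Fin n) : s x ≤ s.sum fun _ e => e := by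
  classical
  by_cases hx : x ∈ s.support
  · exact Finset.single_le_sum (fun _ _ => Nat.zero_le _) hx
  · simp [Finsupp.notMem_support_iff.mp hx]

lemma monGen_mono {K : Type*} [Field K] {n : ℕ} {I : Ideal (MvPolynomial (Fin n) K)}
    {a b : ℕ} (h : MonGen I a) (hab : a ≤ b) : MonGen I b := by
  obtain ⟨S, h1, h2⟩ := h
  exact ⟨S, fun s hs => le_trans (h1 s hs) hab, h2⟩

/-- Pigeonhole: among `M+1` monomial ideals generated in degree `≤ D`, two coincide,
provided `2^((D+1)^n) ≤ M`. -/
lemma pigeon {K : Type*} [Field K] {n D M : ℕ} (I : ℕ → Ideal (MvPolynomial (Fin n) K))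
    (h : ∀ i ≤ M, MonGen (I i) D) (hM : 2 ^ (D + 1) ^ n ≤ M) :
    ∃ i j, i < j ∧ j ≤ M ∧ I j ≤ I i := by
  classical
  set τ := {s : Fin n →₀ ℕ // (s.sum fun _ e => e) ≤ D} with hτ
  have hemb : Function.Injective (fun s : τ => fun x : Fin n => (⟨s.1 x,
      lt_of_le_of_lt (le_trans (le_sum_deg s.1 x) s.2) (Nat.lt_succ_self D)⟩ : Fin (D + 1))) := by
    intro a b hab
    ext x
    exact congrArg Fin.val (congrFun hab x)
  haveI : Fintype τ := Fintype.ofInjective _ hemb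
  have hcardτ : Fintype.card τ ≤ (D + 1) ^ n := by
    calc Fintype.card τ ≤ Fintype.card (Fin n → Fin (D + 1)) :=
          Fintype.card_le_of_injective _ hemb
      _ = (D + 1) ^ n := by simp
  have hS : ∀ i : Fin (M + 1), ∃ S : Set (Fin n →₀ ℕ),
      (∀ s ∈ S, (s.sum fun _ e => e) ≤ D) ∧
      I i = Ideal.span ((fun s => (MvPolynomial.monomial s (1 : K))) '' S) :=
    fun i => h i (Nat.lt_succ_iff.mp i.isLt)
  choose S hSdeg hSspan using hS
  have hcard : Fintype.card (Set τ) < Fintype.card (Fin (M + 1)) := by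
    rw [Fintype.card_set, Fintype.card_fin]
    exact lt_of_le_of_lt (le_trans (Nat.pow_le_pow_right (by norm_num) hcardτ) hM)
      (Nat.lt_succ_self M)
  obtain ⟨i, j, hij, heq⟩ := Fintype.exists_ne_map_eq_of_card_lt
    (fun i : Fin (M + 1) => {t : τ | (t : Fin n →₀ ℕ) ∈ S i}) hcard
  have hSeq : ∀ {a b : Fin (M + 1)},
      ({t : τ | (t : Fin n →₀ ℕ) ∈ S a} = {t : τ | (t : Fin n →₀ ℕ) ∈ S b}) → S a ⊆ S b := by
    intro a b hab s hs
    have hd : (s.sum fun _ e => e) ≤ D := hSdeg a s hs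
    have : (⟨s, hd⟩ : τ) ∈ {t : τ | (t : Fin n →₀ ℕ) ∈ S a} := hs
    rw [hab] at this
    exact this
  have hIeq : I i = I j := by
    rw [hSspan i, hSspan j]
    congr 1
    exact congrArg _ (Set.Subset.antisymm (hSeq heq) (hSeq heq.symm))
  rcases lt_or_gt_of_ne hij with hlt | hlt
  · exact ⟨i, j, hlt, Nat.lt_succ_iff.mp j.isLt, le_of_eq hIeq.symm⟩
  · exact ⟨j, i, hlt, Nat.lt_succ_iff.mp i.isLt, le_of_eq hIeq⟩

/-- For strictly increasing `B` with `B l > 2^{l+2}` and `l > d + 2`: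
`M_d^f(l) < 2^{B(l)^{d+2}}`; concretely, every sequence `I_0, …, I_R` of monomial
ideals with `R = 2^{B(l)^{d+2}}` and `deg (I i) ≤ l + f i` contains `i < j` with
`I i ⊇ I j`. -/
theorem upperBound_slow (K : Type*) [Field K] (B : ℕ → ℕ) (hB : StrictMono B)
    (hB2 : ∀ l, 2 ^ (l + 2) < B l) (d l : ℕ) (hl : d + 2 < l) :
    Mnum K d (fpar B) l < 2 ^ (B l) ^ (d + 2) ∧
    ∀ I : ℕ → Ideal (MvPolynomial (Fin (d + 2)) K),
      (∀ i ≤ 2 ^ (B l) ^ (d + 2), MonGen (I i) (l + fpar B i)) →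
      ∃ i j, i < j ∧ j ≤ 2 ^ (B l) ^ (d + 2) ∧ I j ≤ I i := by
  set R := 2 ^ (B l) ^ (d + 2) with hR
  set D := l + B l / 2 with hD
  -- D + 1 < B l
  have hDlt : D + 1 < B l := by
    have h1 : 2 ^ (l + 1) ≤ B l / 2 := by
      rw [Nat.le_div_iff_mul_le (by norm_num)]
      have : 2 ^ (l + 1) * 2 = 2 ^ (l + 2) := by ring
      have := hB2 l
      omega
    have h2 : l + 1 < 2 ^ (l + 1) := Nat.lt_two_pow_self (n := l + 1)
    have h3 : B l / 2 * 2 ≤ B l := Nat.div_mul_le_self (B l) 2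
    omega
  have hdeg : ∀ i ≤ R, l + fpar B i ≤ D := fun i hi =>
    Nat.add_le_add_left (fpar_le B hB hB2 d l hl i hi) l
  have hub : (D + 1) ^ (d + 2) < (B l) ^ (d + 2) :=
    Nat.pow_lt_pow_left hDlt (by omega)
  have hR1 : 1 ≤ R := Nat.one_le_two_pow
  constructor
  · -- Mnum ≤ R - 1 < R
    have hmem : (R - 1) ∈ {M | ∀ I : ℕ → Ideal (MvPolynomial (Fin (d + 2)) K),
        (∀ i ≤ M, MonGen (I i) (l + fpar B i)) →
        ∃ i j, i < j ∧ j ≤ M ∧ I j ≤ I i} := by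
      intro I hI
      apply pigeon (D := D) I
      · intro i hi
        exact monGen_mono (hI i hi) (hdeg i (by omega))
      · -- 2 ^ (D+1)^(d+2) ≤ R - 1
        set b := (B l) ^ (d + 2) with hb
        have hb1 : 1 ≤ b := Nat.one_le_pow _ _ (by have := hB2 l; omega)
        have ha : 2 ^ (D + 1) ^ (d + 2) ≤ 2 ^ (b - 1) :=
          Nat.pow_le_pow_right (by norm_num) (by omega)
        have h2 : 2 ^ (b - 1) * 2 = 2 ^ b := by
          rw [← pow_succ]; congr 1; omega
        have h3 : 1 ≤ 2 ^ (b - 1) := Nat.one_le_two_pow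
        have : R = 2 ^ b := rfl
        omega
    have hle : Mnum K d (fpar B) l ≤ R - 1 := Nat.sInf_le hmem
    omega
  · intro I hI
    apply pigeon (D := D) I
    · intro i hi
      exact monGen_mono (hI i hi) (hdeg i hi)
    · exact Nat.pow_le_pow_right (by norm_num) (le_of_lt hub)
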